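/- For every integer n ≥ 1, X(n) = D_{n−1} + n, where D_m denotes the number of occurrences of the symbol 0 among the first m symbols TR[0..m−1] of the infinite Tribonacci word. -/

import Mathlib

open Classical

/-- The pair of sequences OEIS A140100 / A140101, defined greedily:
`XY 0 = (0,0)`, `XY 1 = (1,2)`, and for `n > 1`, `XY n = (x, y)` where `x` is least
(and then `y` least) such that `0 < x < y`, neither `x` nor `y` occurs among the earlier
`X`- or `Y`-values with index `1 ≤ k < n`, and `y - x` occurs among neither the earlier
differences `Y k - X k` nor the earlier sums `Y k + X k`. -/
noncomputable def XY : ℕ → ℕ × ℕ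
  | 0 => (0, 0)
  | 1 => (1, 2)
  | n + 2 =>
      let P : ℕ → ℕ → Prop := fun x y =>
        0 < x ∧ x < y ∧
        ∀ k, 1 ≤ k → k < n + 2 →
          (XY k).1 ≠ x ∧ (XY k).1 ≠ y ∧ (XY k).2 ≠ x ∧ (XY k).2 ≠ y ∧
          (XY k).2 - (XY k).1 ≠ y - x ∧ (XY k).2 + (XY k).1 ≠ y - x
      let x := sInf {x | ∃ y, P x y}
      (x, sInf {y | P x y})
  termination_by n => n
  decreasing_by all_goals omega

/-- Sequence OEIS A140100. -/
noncomputable def X (n : ℕ) : ℕ := (XY n).1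

/-- Sequence OEIS A140101. -/
noncomputable def Y (n : ℕ) : ℕ := (XY n).2

/-- The morphism 0 ↦ 01, 1 ↦ 02, 2 ↦ 0. -/
def tribMorph : ℕ → List ℕ
  | 0 => [0, 1]
  | 1 => [0, 2]
  | _ => [0]

/-- The infinite Tribonacci word TR = 0102010010201⋯, the fixed point of the
morphism 0 ↦ 01, 1 ↦ 02, 2 ↦ 0 starting with 0. -/
def TR (n : ℕ) : ℕ := ((fun l : List ℕ => (l.map tribMorph).flatten)^[n + 1] [0]).getD n 0

/-- For `n ≥ 1`, one more than the position (indexed from 0) of the `n`-th occurrence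
of the symbol `s` in TR; and `0` at `n = 0`. -/
noncomputable def posSeq (s : ℕ) (n : ℕ) : ℕ :=
  if n = 0 then 0 else Nat.nth (fun m => TR m = s) (n - 1) + 1

/-- `D m` is the number of occurrences of the symbol 0 among the first `m` symbols
`TR[0..m-1]` of the infinite Tribonacci word (OEIS A276796). -/
def D (m : ℕ) : ℕ := ((Finset.range m).filter (fun i => TR i = 0)).card

namespace Trib

def sig (l : List ℕ) : List ℕ := (l.map tribMorph).flatten

def W (k : ℕ) : List ℕ := sig^[k] [0]

lemma TR_def (n : ℕ) : TR n = (W (n + 1)).getD n 0 := rfl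

lemma sig_append (a b : List ℕ) : sig (a ++ b) = sig a ++ sig b := by
  simp [sig]

lemma sig_cons (a : ℕ) (l : List ℕ) : sig (a :: l) = tribMorph a ++ sig l := by
  simp [sig]

lemma W_succ (k : ℕ) : W (k + 1) = sig (W k) := by
  simp [W, Function.iterate_succ_apply']

lemma sig_prefix {u v : List ℕ} (h : u <+: v) : sig u <+: sig v := by
  obtain ⟨t, rfl⟩ := h
  exact ⟨sig t, (sig_append u t).symm⟩

lemma W_prefix (k : ℕ) : W k <+: W (k + 1) := by
  induction k with
  | zero => exact ⟨[1], rfl⟩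
  | succ k ih => rw [W_succ, W_succ]; exact sig_prefix ih

lemma W_prefix_le {k j : ℕ} (h : k ≤ j) : W k <+: W j := by
  induction j with
  | zero => simpa [Nat.le_zero.mp h]
  | succ j ih =>
    rcases Nat.lt_or_ge k (j+1) with h' | h'
    · exact (ih (Nat.lt_succ_iff.mp h')).trans (W_prefix j)
    · have : k = j + 1 := le_antisymm h h'
      simp [this]

lemma tribMorph_ne_nil (a : ℕ) : tribMorph a ≠ [] := by
  match a with
  | 0 => simp [tribMorph]
  | 1 => simp [tribMorph]
  | n+2 => simp [tribMorph]

lemma length_sig_ge (l : List ℕ) : l.length ≤ (sig l).length := by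
  induction l with
  | nil => simp [sig]
  | cons a t ih =>
    rw [sig_cons]
    have := List.length_pos_iff.mpr (tribMorph_ne_nil a)
    simp only [List.length_append, List.length_cons]
    omega

lemma W_head (k : ℕ) : ∃ t, W k = 0 :: t := by
  obtain ⟨t, ht⟩ := W_prefix_le (Nat.zero_le k)
  cases k with
  | zero => exact ⟨[], rfl⟩
  | succ k => exact ⟨t, by simpa [W] using ht.symm⟩

lemma length_W (k : ℕ) : k + 1 ≤ (W k).length := by
  induction k with
  | zero => simp [W]
  | succ k ih =>
    obtain ⟨t, ht⟩ := W_head k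
    rw [W_succ, ht, sig_cons]
    have h1 := length_sig_ge t
    have hlen : (W k).length = t.length + 1 := by rw [ht]; simp
    have h2 : (tribMorph 0).length = 2 := rfl
    simp only [List.length_append, h2]
    omega

lemma prefix_getD {u v : List ℕ} (h : u <+: v) {n : ℕ} (hn : n < u.length) :
    v.getD n 0 = u.getD n 0 := by
  obtain ⟨t, rfl⟩ := h
  exact List.getD_append u t 0 n hn

lemma TR_eq_getD {k n : ℕ} (hn : n < (W k).length) : TR n = (W k).getD n 0 := by
  rw [TR_def]
  rcases Nat.le_total k (n+1) with h | h
  · exact prefix_getD (W_prefix_le h) hn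
  · exact (prefix_getD (W_prefix_le h) (lt_of_lt_of_le (by omega : n < n + 2) (length_W (n+1)))).symm

def Pfx (m : ℕ) : List ℕ := (List.range m).map TR

@[simp] lemma length_Pfx (m : ℕ) : (Pfx m).length = m := by simp [Pfx]

lemma Pfx_succ (m : ℕ) : Pfx (m + 1) = Pfx m ++ [TR m] := by
  simp [Pfx, List.range_succ]

lemma getD_Pfx {n m : ℕ} (h : n < m) : (Pfx m).getD n 0 = TR n := by
  rw [Pfx, List.getD_eq_getElem _ _ (by simpa using h)]
  simp

lemma W_eq_Pfx (k : ℕ) : W k = Pfx (W k).length := by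
  apply List.ext_getElem (by simp)
  intro i h1 h2
  have : TR i = (W k).getD i 0 := TR_eq_getD h1
  rw [List.getD_eq_getElem _ _ h1] at this
  rw [← this]
  simp [Pfx]

lemma take_Pfx {l m : ℕ} (h : l ≤ m) : (Pfx m).take l = Pfx l := by
  simp [Pfx, ← List.map_take, List.take_range, Nat.min_eq_left h]

lemma Pfx_prefix_W {m k : ℕ} (h : m ≤ (W k).length) : Pfx m <+: W k := by
  rw [W_eq_Pfx k, ← take_Pfx h]
  exact List.take_prefix _ _

lemma prefix_W_eq_Pfx {u : List ℕ} {k : ℕ} (h : u <+: W k) : u = Pfx u.length := by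
  have h1 : u = (W k).take u.length := by
    obtain ⟨t, ht⟩ := h
    rw [← ht]; simp
  conv_lhs => rw [h1, W_eq_Pfx k]
  exact take_Pfx h.length_le

lemma sig_Pfx_eq (m : ℕ) : sig (Pfx m) = Pfx (sig (Pfx m)).length := by
  have hm : m ≤ (W m).length := le_trans (Nat.le_succ m) (length_W m)
  have h1 : sig (Pfx m) <+: W (m + 1) := by
    rw [W_succ]; exact sig_prefix (Pfx_prefix_W hm)
  exact prefix_W_eq_Pfx h1


def E (m : ℕ) : ℕ := ((Finset.range m).filter (fun i => TR i = 1)).card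

lemma D_succ (m : ℕ) : D (m + 1) = D m + (if TR m = 0 then 1 else 0) := by
  unfold D
  rw [Finset.range_add_one, Finset.filter_insert]
  split <;> simp [Finset.card_insert_of_notMem]

lemma E_succ (m : ℕ) : E (m + 1) = E m + (if TR m = 1 then 1 else 0) := by
  unfold E
  rw [Finset.range_add_one, Finset.filter_insert]
  split <;> simp [Finset.card_insert_of_notMem]

@[simp] lemma D_zero : D 0 = 0 := rfl
@[simp] lemma E_zero : E 0 = 0 := rfl

lemma D_mono : Monotone D := by
  apply monotone_nat_of_le_succ
  intro n; rw [D_succ]; split <;> omega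

lemma E_mono : Monotone E := by
  apply monotone_nat_of_le_succ
  intro n; rw [E_succ]; split <;> omega

lemma D_step (m : ℕ) : D (m + 1) ≤ D m + 1 := by rw [D_succ]; split <;> omega
lemma E_step (m : ℕ) : E (m + 1) ≤ E m + 1 := by rw [E_succ]; split <;> omega

lemma D_count (m : ℕ) : D m = (Pfx m).count 0 := by
  induction m with
  | zero => rfl
  | succ m ih =>
    rw [D_succ, Pfx_succ, List.count_append, ih]
    congr 1
    split
    · simp_all
    · rename_i h
      rw [eq_comm, List.count_eq_zero]
      simp only [List.mem_singleton]
      omega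

lemma E_count (m : ℕ) : E m = (Pfx m).count 1 := by
  induction m with
  | zero => rfl
  | succ m ih =>
    rw [E_succ, Pfx_succ, List.count_append, ih]
    congr 1
    split
    · simp_all
    · rename_i h
      rw [eq_comm, List.count_eq_zero]
      simp only [List.mem_singleton]
      omega

lemma trib_cases (a : ℕ) : tribMorph a = [0,1] ∧ a = 0 ∨ tribMorph a = [0,2] ∧ a = 1 ∨ tribMorph a = [0] ∧ a ≠ 0 ∧ a ≠ 1 := by
  match a with
  | 0 => left; exact ⟨rfl, rfl⟩
  | 1 => right; left; exact ⟨rfl, rfl⟩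
  | n+2 => right; right; exact ⟨rfl, by omega, by omega⟩

lemma length_sig (l : List ℕ) : (sig l).length = l.length + l.count 0 + l.count 1 := by
  induction l with
  | nil => rfl
  | cons a t ih =>
    rw [sig_cons, List.length_append, ih]
    rcases trib_cases a with ⟨h, rfl⟩ | ⟨h, rfl⟩ | ⟨h, h0, h1⟩ <;>
      simp [h, List.count_cons, *] <;> omega <;> omega

lemma count0_sig (l : List ℕ) : (sig l).count 0 = l.length := by
  induction l with
  | nil => rfl
  | cons a t ih =>
    rw [sig_cons, List.count_append, ih]
    rcases trib_cases a with ⟨h, rfl⟩ | ⟨h, rfl⟩ | ⟨h, h0, h1⟩ <;> simp [h] <;> omega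

lemma count1_sig (l : List ℕ) : (sig l).count 1 = l.count 0 := by
  induction l with
  | nil => rfl
  | cons a t ih =>
    rw [sig_cons, List.count_append, ih]
    rcases trib_cases a with ⟨h, rfl⟩ | ⟨h, rfl⟩ | ⟨h, h0, h1⟩ <;>
      simp [h, List.count_cons, *] <;> omega

def L (m : ℕ) : ℕ := m + D m + E m

lemma sig_Pfx (m : ℕ) : sig (Pfx m) = Pfx (L m) := by
  have h := sig_Pfx_eq m
  rw [h]
  congr 1
  rw [length_sig, ← D_count, ← E_count, length_Pfx]
  rfl

lemma D_L (m : ℕ) : D (L m) = m := by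
  rw [D_count, ← sig_Pfx, count0_sig, length_Pfx]

lemma E_L (m : ℕ) : E (L m) = D m := by
  rw [E_count, ← sig_Pfx, count1_sig, ← D_count]

lemma Pfx_L_succ (m : ℕ) : Pfx (L (m + 1)) = Pfx (L m) ++ tribMorph (TR m) := by
  rw [← sig_Pfx, ← sig_Pfx, Pfx_succ, sig_append]
  congr 1
  simp [sig]

lemma L_lt_L_succ (m : ℕ) : L m < L (m + 1) := by
  have h : (Pfx (L (m+1))).length = (Pfx (L m)).length + (tribMorph (TR m)).length := by
    rw [Pfx_L_succ]; simp
  simp only [length_Pfx] at h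
  have := List.length_pos_iff.mpr (tribMorph_ne_nil (TR m))
  omega

lemma TR_L (m : ℕ) : TR (L m) = 0 := by
  have h : (Pfx (L (m+1))).getD (L m) 0 = TR (L m) := getD_Pfx (L_lt_L_succ m)
  rw [Pfx_L_succ, List.getD_append_right _ _ _ _ (by simp)] at h
  rw [← h]
  simp only [length_Pfx, Nat.sub_self]
  rcases trib_cases (TR m) with ⟨h', _⟩ | ⟨h', _⟩ | ⟨h', _, _⟩ <;> simp [h']

lemma TR_L_succ_of_zero {m : ℕ} (h0 : TR m = 0) : TR (L m + 1) = 1 := by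
  have hlen : L (m + 1) = L m + 2 := by
    have h : (Pfx (L (m+1))).length = (Pfx (L m)).length + (tribMorph (TR m)).length := by
      rw [Pfx_L_succ]; simp
    simp only [length_Pfx, h0] at h
    simpa [tribMorph] using h
  have h : (Pfx (L (m+1))).getD (L m + 1) 0 = TR (L m + 1) := getD_Pfx (by omega)
  rw [Pfx_L_succ, List.getD_append_right _ _ _ _ (by simp)] at h
  rw [← h, h0]
  simp only [length_Pfx, h0, Nat.add_sub_cancel_left]
  rfl

lemma D_surj (m : ℕ) : ∃ p, D p = m := ⟨L m, D_L m⟩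

lemma E_surj (m : ℕ) : ∃ p, E p = m := ⟨L (L m), by rw [E_L, D_L]⟩



end Trib

namespace LM

variable {g : ℕ → ℕ}

noncomputable def pp (g : ℕ → ℕ) (m : ℕ) : ℕ := sInf {p | g p = m}

lemma ivt (hstep : ∀ m, g (m+1) ≤ g m + 1) (hg0 : g 0 = 0) :
    ∀ q m, m ≤ g q → ∃ r, r ≤ q ∧ g r = m := by
  intro q
  induction q with
  | zero => intro m hm; exact ⟨0, le_rfl, by omega⟩
  | succ q ih =>
    intro m hm
    rcases le_or_gt m (g q) with h | h
    · obtain ⟨r, hr, hgr⟩ := ih m h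
      exact ⟨r, by omega, hgr⟩
    · have := hstep q
      exact ⟨q+1, le_rfl, by omega⟩

lemma g_pp (hsurj : ∀ m, ∃ p, g p = m) (m : ℕ) : g (pp g m) = m :=
  Nat.sInf_mem (hsurj m)

lemma galois (hstep : ∀ m, g (m+1) ≤ g m + 1) (hg0 : g 0 = 0) (hmono : Monotone g)
    (hsurj : ∀ m, ∃ p, g p = m) (m q : ℕ) : pp g m ≤ q ↔ m ≤ g q := by
  constructor
  · intro h
    calc m = g (pp g m) := (g_pp hsurj m).symm
    _ ≤ g q := hmono h
  · intro h
    obtain ⟨r, hr, hgr⟩ := ivt hstep hg0 q m h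
    exact le_trans (Nat.sInf_le hgr) hr

lemma pp_mono (hstep : ∀ m, g (m+1) ≤ g m + 1) (hg0 : g 0 = 0) (hmono : Monotone g)
    (hsurj : ∀ m, ∃ p, g p = m) : Monotone (pp g) := by
  intro a b hab
  rw [galois hstep hg0 hmono hsurj]
  calc a ≤ b := hab
  _ = g (pp g b) := (g_pp hsurj b).symm

-- helpers
lemma SA_succ (F : ℕ → ℕ) (hF : StrictMono F) (hFge : ∀ n, n ≤ F n) (v : ℕ) :
    ((Finset.Icc 1 (v+1)).filter (fun n => F n ≤ v + 1)).card
    = ((Finset.Icc 1 v).filter (fun n => F n ≤ v)).card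
      + ((Finset.Icc 1 (v+1)).filter (fun n => F n = v + 1)).card := by
  rw [← Finset.card_union_of_disjoint]
  · congr 1
    ext n
    simp only [Finset.mem_union, Finset.mem_filter, Finset.mem_Icc]
    constructor
    · rintro ⟨⟨hn1, hn2⟩, hF'⟩
      rcases Nat.lt_or_ge (F n) (v+1) with h | h
      · exact Or.inl ⟨⟨hn1, by have := hFge n; omega⟩, by omega⟩
      · exact Or.inr ⟨⟨hn1, hn2⟩, by omega⟩
    · rintro (⟨⟨hn1, hn2⟩, hF'⟩ | ⟨⟨hn1, hn2⟩, hF'⟩)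
      · exact ⟨⟨hn1, by omega⟩, by omega⟩
      · exact ⟨⟨hn1, hn2⟩, by omega⟩
  · rw [Finset.disjoint_left]
    intro n hn hn'
    simp only [Finset.mem_filter, Finset.mem_Icc] at hn hn'
    omega

lemma card_eq_indicator (F : ℕ → ℕ) (hF : StrictMono F) (hFge : ∀ n, n ≤ F n) (w : ℕ) (hw : 1 ≤ w) :
    ((Finset.Icc 1 w).filter (fun n => F n = w)).card ≤ 1 ∧
    (((Finset.Icc 1 w).filter (fun n => F n = w)).card = 1 ↔ ∃ n, 1 ≤ n ∧ F n = w) := by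
  constructor
  · apply Finset.card_le_one.mpr
    intro a ha b hb
    simp only [Finset.mem_filter, Finset.mem_Icc] at ha hb
    exact hF.injective (ha.2.trans hb.2.symm)
  · constructor
    · intro h
      obtain ⟨a, ha⟩ := Finset.card_eq_one.mp h
      have : a ∈ (Finset.Icc 1 w).filter (fun n => F n = w) := ha ▸ Finset.mem_singleton_self a
      simp only [Finset.mem_filter, Finset.mem_Icc] at this
      exact ⟨a, this.1.1, this.2⟩
    · rintro ⟨n, hn1, hn2⟩
      have hmem : n ∈ (Finset.Icc 1 w).filter (fun n => F n = w) := by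
        simp only [Finset.mem_filter, Finset.mem_Icc]
        exact ⟨⟨hn1, by have := hFge n; omega⟩, hn2⟩
      have h1 : 1 ≤ ((Finset.Icc 1 w).filter (fun n => F n = w)).card :=
        Finset.card_pos.mpr ⟨n, hmem⟩
      have h2 : ((Finset.Icc 1 w).filter (fun n => F n = w)).card ≤ 1 := by
        apply Finset.card_le_one.mpr
        intro a ha b hb
        simp only [Finset.mem_filter, Finset.mem_Icc] at ha hb
        exact hF.injective (ha.2.trans hb.2.symm)
      omega


section main

variable (hstep : ∀ m, g (m+1) ≤ g m + 1) (hg0 : g 0 = 0) (hmono : Monotone g)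
  (hsurj : ∀ m, ∃ p, g p = m)

-- A n = n + g (n-1), B n = n + pp g n
include hstep hg0 hmono hsurj

lemma A_strictmono : StrictMono (fun n => n + g (n - 1)) := by
  apply strictMono_nat_of_lt_succ
  intro n
  have : g (n - 1) ≤ g (n + 1 - 1) := hmono (by omega)
  omega

lemma B_strictmono : StrictMono (fun n => n + pp g n) := by
  apply strictMono_nat_of_lt_succ
  intro n
  have : pp g n ≤ pp g (n + 1) := pp_mono hstep hg0 hmono hsurj (by omega)
  omega

lemma key (N n : ℕ) (h1 : 1 ≤ n) (h2 : n ≤ N) :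
    n + pp g n ≤ N ↔ ¬ ((N + 1 - n) + g (N + 1 - n - 1) ≤ N) := by
  have e1 : n + pp g n ≤ N ↔ pp g n ≤ N - n := by omega
  have e2 := galois hstep hg0 hmono hsurj n (N - n)
  have e3 : N + 1 - n - 1 = N - n := by omega
  rw [e1, e2, e3]
  omega

lemma cardsum (N : ℕ) :
    ((Finset.Icc 1 N).filter (fun n => n + g (n - 1) ≤ N)).card
    + ((Finset.Icc 1 N).filter (fun n => n + pp g n ≤ N)).card = N := by
  have hB : ((Finset.Icc 1 N).filter (fun n => n + pp g n ≤ N)).card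
      = ((Finset.Icc 1 N).filter (fun n => ¬ (n + g (n - 1) ≤ N))).card := by
    apply Finset.card_bij' (fun n _ => N + 1 - n) (fun n _ => N + 1 - n)
    · intro a ha
      simp only [Finset.mem_filter, Finset.mem_Icc] at ha ⊢
      have hk := (key hstep hg0 hmono hsurj N a ha.1.1 ha.1.2).mp ha.2
      exact ⟨⟨by omega, by omega⟩, hk⟩
    · intro a ha
      simp only [Finset.mem_filter, Finset.mem_Icc] at ha ⊢
      have h1 : 1 ≤ N + 1 - a := by omega
      have h2 : N + 1 - a ≤ N := by omega
      have hk := key hstep hg0 hmono hsurj N (N + 1 - a) h1 h2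
      have e : N + 1 - (N + 1 - a) = a := by omega
      rw [e] at hk
      exact ⟨⟨h1, h2⟩, hk.mpr ha.2⟩
    · intro a ha
      simp only [Finset.mem_filter, Finset.mem_Icc] at ha
      omega
    · intro a ha
      simp only [Finset.mem_filter, Finset.mem_Icc] at ha
      omega
  rw [hB]
  rw [Finset.card_filter_add_card_filter_not]
  simp

theorem partition (v : ℕ) (hv : 1 ≤ v) :
    (∃ n, 1 ≤ n ∧ n + g (n - 1) = v) ↔ ¬ (∃ n, 1 ≤ n ∧ n + pp g n = v) := by
  obtain ⟨w, rfl⟩ : ∃ w, v = w + 1 := ⟨v - 1, by omega⟩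
  have hA := SA_succ (fun n => n + g (n-1)) (A_strictmono hstep hg0 hmono hsurj)
    (fun n => by show n ≤ n + g (n-1); omega) w
  have hB := SA_succ (fun n => n + pp g n) (B_strictmono hstep hg0 hmono hsurj)
    (fun n => by show n ≤ n + pp g n; omega) w
  have h1 := cardsum hstep hg0 hmono hsurj (w + 1)
  have h2 := cardsum hstep hg0 hmono hsurj w
  have hAi := card_eq_indicator (fun n => n + g (n-1)) (A_strictmono hstep hg0 hmono hsurj)
    (fun n => by show n ≤ n + g (n-1); omega) (w+1) (by omega)
  have hBi := card_eq_indicator (fun n => n + pp g n) (B_strictmono hstep hg0 hmono hsurj)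
    (fun n => by show n ≤ n + pp g n; omega) (w+1) (by omega)
  set a := ((Finset.Icc 1 (w+1)).filter (fun n => n + g (n-1) = w+1)).card with ha
  set b := ((Finset.Icc 1 (w+1)).filter (fun n => n + pp g n = w+1)).card with hb
  rw [← hAi.2, ← hBi.2]
  omega

end main

end LM


namespace Trib

def xv (n : ℕ) : ℕ := n + D (n - 1)
def yv (n : ℕ) : ℕ := 2 * n + D (n - 1) + E (n - 1)
def dv (n : ℕ) : ℕ := n + E (n - 1)
def sv (n : ℕ) : ℕ := 3 * n + 2 * D (n - 1) + E (n - 1)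

lemma xv_strict : StrictMono xv := by
  apply strictMono_nat_of_lt_succ
  intro n
  have : D (n - 1) ≤ D (n + 1 - 1) := D_mono (by omega)
  simp only [xv]; omega

lemma yv_strict : StrictMono yv := by
  apply strictMono_nat_of_lt_succ
  intro n
  have h1 : D (n - 1) ≤ D (n + 1 - 1) := D_mono (by omega)
  have h2 : E (n - 1) ≤ E (n + 1 - 1) := E_mono (by omega)
  simp only [yv]; omega

lemma dv_strict : StrictMono dv := by
  apply strictMono_nat_of_lt_succ
  intro n
  have : E (n - 1) ≤ E (n + 1 - 1) := E_mono (by omega)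
  simp only [dv]; omega

lemma sv_strict : StrictMono sv := by
  apply strictMono_nat_of_lt_succ
  intro n
  have h1 : D (n - 1) ≤ D (n + 1 - 1) := D_mono (by omega)
  have h2 : E (n - 1) ≤ E (n + 1 - 1) := E_mono (by omega)
  simp only [sv]; omega

lemma yv_eq_xv_add_dv (n : ℕ) : yv n = xv n + dv n := by
  simp only [xv, yv, dv]; omega

lemma sv_eq_yv_add_xv (n : ℕ) : sv n = yv n + xv n := by
  simp only [xv, yv, sv]; omega

lemma xv_ge (n : ℕ) : n ≤ xv n := by simp only [xv]; omega
lemma yv_ge (n : ℕ) : n ≤ yv n := by simp only [yv]; omega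
lemma dv_ge (n : ℕ) : n ≤ dv n := by simp only [dv]; omega
lemma sv_ge (n : ℕ) : n ≤ sv n := by simp only [sv]; omega
lemma dv_lt_sv {n : ℕ} (hn : 1 ≤ n) : dv n < sv n := by simp only [dv, sv]; omega

lemma ppD (n : ℕ) (hn : 1 ≤ n) : LM.pp D n = L (n - 1) + 1 := by
  have hDL : D (L (n - 1)) = n - 1 := D_L (n - 1)
  have hmem : D (L (n - 1) + 1) = n := by
    rw [D_succ, TR_L, hDL]
    simp; omega
  apply le_antisymm
  · exact Nat.sInf_le hmem
  · by_contra h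
    push_neg at h
    have hm : D (LM.pp D n) = n := LM.g_pp D_surj n
    have hle : LM.pp D n ≤ L (n - 1) := by omega
    have := D_mono hle
    omega

lemma ppE (n : ℕ) (hn : 1 ≤ n) : LM.pp E n = L (L (n - 1)) + 2 := by
  set q := L (n - 1) with hq
  have h1 : E (L q) = n - 1 := by rw [E_L, hq, D_L]
  have h2 : TR (L q) = 0 := TR_L q
  have h3 : TR (L q + 1) = 1 := TR_L_succ_of_zero (TR_L (n - 1))
  have h4 : E (L q + 1) = n - 1 := by rw [E_succ, h1, h2]; simp
  have h5 : E (L q + 2) = n := by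
    have : L q + 2 = (L q + 1) + 1 := rfl
    rw [this, E_succ, h3, h4]; simp; omega
  apply le_antisymm
  · exact Nat.sInf_le h5
  · by_contra h
    push_neg at h
    have hm : E (LM.pp E n) = n := LM.g_pp E_surj n
    have hle : LM.pp E n ≤ L q + 1 := by omega
    have := E_mono hle
    omega

lemma yv_eq_pp (n : ℕ) (hn : 1 ≤ n) : yv n = n + LM.pp D n := by
  rw [ppD n hn]
  simp only [yv, L]
  omega

lemma sv_eq_pp (n : ℕ) (hn : 1 ≤ n) : sv n = n + LM.pp E n := by
  rw [ppE n hn]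
  have hDL : D (L (n - 1)) = n - 1 := D_L (n - 1)
  have hEL : E (L (n - 1)) = D (n - 1) := E_L (n - 1)
  simp only [L] at hDL hEL
  simp only [sv, L]
  omega

lemma xor_xy (v : ℕ) (hv : 1 ≤ v) :
    (∃ n, 1 ≤ n ∧ xv n = v) ↔ ¬ (∃ n, 1 ≤ n ∧ yv n = v) := by
  have h := LM.partition (g := D) D_step D_zero D_mono D_surj v hv
  have e1 : (∃ n, 1 ≤ n ∧ n + D (n - 1) = v) ↔ (∃ n, 1 ≤ n ∧ xv n = v) := Iff.rfl
  have e2 : (∃ n, 1 ≤ n ∧ n + LM.pp D n = v) ↔ (∃ n, 1 ≤ n ∧ yv n = v) := by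
    constructor
    · rintro ⟨n, hn, he⟩; exact ⟨n, hn, by rw [yv_eq_pp n hn]; exact he⟩
    · rintro ⟨n, hn, he⟩; exact ⟨n, hn, by rw [← yv_eq_pp n hn]; exact he⟩
  rw [← e1, ← e2]
  exact h

lemma xor_ds (v : ℕ) (hv : 1 ≤ v) :
    (∃ n, 1 ≤ n ∧ dv n = v) ↔ ¬ (∃ n, 1 ≤ n ∧ sv n = v) := by
  have h := LM.partition (g := E) E_step E_zero E_mono E_surj v hv
  have e1 : (∃ n, 1 ≤ n ∧ n + E (n - 1) = v) ↔ (∃ n, 1 ≤ n ∧ dv n = v) := Iff.rfl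
  have e2 : (∃ n, 1 ≤ n ∧ n + LM.pp E n = v) ↔ (∃ n, 1 ≤ n ∧ sv n = v) := by
    constructor
    · rintro ⟨n, hn, he⟩; exact ⟨n, hn, by rw [sv_eq_pp n hn]; exact he⟩
    · rintro ⟨n, hn, he⟩; exact ⟨n, hn, by rw [← sv_eq_pp n hn]; exact he⟩
  rw [← e1, ← e2]
  exact h

lemma xy_ne {j k : ℕ} (hj : 1 ≤ j) (hk : 1 ≤ k) : xv j ≠ yv k := by
  intro h
  have hv : 1 ≤ xv j := le_trans hj (xv_ge j)
  exact (xor_xy (xv j) hv).mp ⟨j, hj, rfl⟩ ⟨k, hk, h.symm⟩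

lemma ds_ne {j k : ℕ} (hj : 1 ≤ j) (hk : 1 ≤ k) : dv j ≠ sv k := by
  intro h
  have hv : 1 ≤ dv j := le_trans hj (dv_ge j)
  exact (xor_ds (dv j) hv).mp ⟨j, hj, rfl⟩ ⟨k, hk, h.symm⟩

lemma cover_xy (v : ℕ) (hv : 1 ≤ v) :
    (∃ j, 1 ≤ j ∧ xv j = v) ∨ (∃ j, 1 ≤ j ∧ yv j = v) := by
  by_cases h : ∃ j, 1 ≤ j ∧ xv j = v
  · exact Or.inl h
  · right
    by_contra h'
    exact h ((xor_xy v hv).mpr h')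

lemma cover_ds (v : ℕ) (hv : 1 ≤ v) :
    (∃ j, 1 ≤ j ∧ dv j = v) ∨ (∃ j, 1 ≤ j ∧ sv j = v) := by
  by_cases h : ∃ j, 1 ≤ j ∧ dv j = v
  · exact Or.inl h
  · right
    by_contra h'
    exact h ((xor_ds v hv).mpr h')

/-- The greedy predicate from the definition of `XY`. -/
def Q (N x y : ℕ) : Prop :=
  0 < x ∧ x < y ∧
  ∀ k, 1 ≤ k → k < N →
    (XY k).1 ≠ x ∧ (XY k).1 ≠ y ∧ (XY k).2 ≠ x ∧ (XY k).2 ≠ y ∧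
    (XY k).2 - (XY k).1 ≠ y - x ∧ (XY k).2 + (XY k).1 ≠ y - x

lemma XY_succ (m : ℕ) :
    XY (m + 2) = (sInf {x | ∃ y, Q (m + 2) x y},
      sInf {y | Q (m + 2) (sInf {x | ∃ y, Q (m + 2) x y}) y}) := by
  rw [XY]
  rfl

theorem XY_eq : ∀ n, 1 ≤ n → XY n = (xv n, yv n) := by
  intro n
  induction n using Nat.strong_induction_on with
  | _ n ih =>
    intro hn
    match n, hn, ih with
    | 1, _, _ =>
      have h1 : xv 1 = 1 := by simp [xv]
      have h2 : yv 1 = 2 := by simp [yv]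
      rw [h1, h2]
      rw [XY]
    | (m + 2), _, ih =>
      set N := m + 2 with hN
      have hN2 : 2 ≤ N := by omega
      have ihk : ∀ k, 1 ≤ k → k < N → XY k = (xv k, yv k) := fun k h1 h2 => ih k h2 h1
      have hxpos : 0 < xv N := lt_of_lt_of_le (by omega) (xv_ge N)
      have hxy : xv N < yv N := by
        have := dv_ge N
        rw [yv_eq_xv_add_dv]
        omega
      have hQmain : Q N (xv N) (yv N) := by
        refine ⟨hxpos, hxy, ?_⟩
        intro k hk1 hk2
        rw [ihk k hk1 hk2]
        have hdfact : yv k - xv k = dv k := by rw [yv_eq_xv_add_dv]; omega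
        have hdN : yv N - xv N = dv N := by rw [yv_eq_xv_add_dv]; omega
        refine ⟨?_, ?_, ?_, ?_, ?_, ?_⟩
        · exact ne_of_lt (xv_strict hk2)
        · exact ne_of_lt (lt_trans (xv_strict hk2) hxy)
        · exact fun h => xy_ne (by omega) hk1 h.symm
        · exact ne_of_lt (yv_strict hk2)
        · rw [hdfact, hdN]
          exact ne_of_lt (dv_strict hk2)
        · rw [hdN, ← sv_eq_yv_add_xv]
          exact fun h => ds_ne (by omega) hk1 h.symm
      have hxmin : ∀ v, v < xv N → ¬ ∃ y', Q N v y' := by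
        rintro v hv ⟨y', hQ⟩
        have hv1 : 1 ≤ v := hQ.1
        rcases cover_xy v hv1 with ⟨j, hj1, hj2⟩ | ⟨j, hj1, hj2⟩
        · have hjN : j < N := by
            by_contra h
            push_neg at h
            have := xv_strict.monotone h
            omega
          have := (hQ.2.2 j hj1 hjN).1
          rw [ihk j hj1 hjN] at this
          exact this hj2
        · have hjN : j < N := by
            by_contra h
            push_neg at h
            have h1 := yv_strict.monotone h
            omega
          have := (hQ.2.2 j hj1 hjN).2.2.1
          rw [ihk j hj1 hjN] at this
          exact this hj2
      have hymin : ∀ v, v < yv N → ¬ Q N (xv N) v := by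
        intro v hv hQ
        have hxv : xv N < v := hQ.2.1
        have hw1 : 1 ≤ v - xv N := by omega
        have hwlt : v - xv N < dv N := by
          have := yv_eq_xv_add_dv N
          omega
        rcases cover_ds (v - xv N) hw1 with ⟨j, hj1, hj2⟩ | ⟨j, hj1, hj2⟩
        · have hjN : j < N := by
            by_contra h
            push_neg at h
            have := dv_strict.monotone h
            omega
          have hc := (hQ.2.2 j hj1 hjN).2.2.2.2.1
          rw [ihk j hj1 hjN] at hc
          have hdfact : yv j - xv j = dv j := by rw [yv_eq_xv_add_dv]; omega
          simp only at hc
          rw [hdfact] at hc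
          exact hc hj2
        · have hjN : j < N := by
            by_contra h
            push_neg at h
            have h1 := sv_strict.monotone h
            have h2 := dv_lt_sv (by omega : 1 ≤ N)
            omega
          have hc := (hQ.2.2 j hj1 hjN).2.2.2.2.2
          rw [ihk j hj1 hjN] at hc
          simp only at hc
          rw [← sv_eq_yv_add_xv] at hc
          exact hc hj2
      have hSx : sInf {x | ∃ y, Q N x y} = xv N := by
        have hmem : xv N ∈ {x | ∃ y, Q N x y} := ⟨yv N, hQmain⟩
        apply le_antisymm (Nat.sInf_le hmem)
        by_contra h
        push_neg at h
        have hin : sInf {x | ∃ y, Q N x y} ∈ {x | ∃ y, Q N x y} := Nat.sInf_mem ⟨_, hmem⟩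
        exact hxmin _ h hin
      have hSy : sInf {y | Q N (xv N) y} = yv N := by
        have hmem : yv N ∈ {y | Q N (xv N) y} := hQmain
        apply le_antisymm (Nat.sInf_le hmem)
        by_contra h
        push_neg at h
        have hin : sInf {y | Q N (xv N) y} ∈ {y | Q N (xv N) y} := Nat.sInf_mem ⟨_, hmem⟩
        exact hymin _ h hin
      rw [hN] at hSx hSy ⊢
      rw [XY_succ m, hSx, hSy]

end Trib

theorem X_eq_D_add_n (n : ℕ) (hn : 1 ≤ n) : X n = D (n - 1) + n := by
  have h := Trib.XY_eq n hn
  have : X n = (XY n).1 := rfl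
  rw [this, h]
  simp only [Trib.xv]
  omega
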